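/- Let G be a full and flexible group of homeomorphisms of Cantor space X. If h is a homeomorphism of X that normalizes G (i.e., h⁻¹Gh = G) and h acts as the identity on some nonempty clopen subset Y of X, then h ∈ G. -/

import Mathlib

open Set

/-- The group structure on self-homeomorphisms of a topological space,
with `(f * g) x = f (g x)`. -/
instance homeoGroup {X : Type*} [TopologicalSpace X] : Group (X ≃ₜ X) where
  mul f g := g.trans f
  one := Homeomorph.refl X
  inv := Homeomorph.symm
  mul_assoc f g h := Homeomorph.ext fun _ => rfl
  one_mul f := Homeomorph.ext fun _ => rfl
  mul_one f := Homeomorph.ext fun _ => rfl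
  inv_mul_cancel f := Homeomorph.ext fun x => f.symm_apply_apply x

/-- Cantor space, realized concretely as `{0,1}^ℕ`. -/
abbrev Cantor : Type := ℕ → Bool

/-- `h` locally agrees with the group `G`: every point has an open neighbourhood
on which `h` coincides with some element of `G`. -/
def LocallyAgrees {X : Type*} [TopologicalSpace X] (G : Subgroup (X ≃ₜ X)) (h : X ≃ₜ X) : Prop :=
  ∀ x : X, ∃ U : Set X, IsOpen U ∧ x ∈ U ∧ ∃ g ∈ G, Set.EqOn (⇑h) (⇑g) U

/-- `G` is a full group of homeomorphisms. -/
def IsFull {X : Type*} [TopologicalSpace X] (G : Subgroup (X ≃ₜ X)) : Prop :=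
  ∀ h : X ≃ₜ X, LocallyAgrees G h → h ∈ G

/-- `G` is flexible: any proper closed set with nonempty interior can be mapped
into any other by some element of `G`. -/
def IsFlexible {X : Type*} [TopologicalSpace X] (G : Subgroup (X ≃ₜ X)) : Prop :=
  ∀ E₁ E₂ : Set X, IsClosed E₁ → E₁ ≠ Set.univ → (interior E₁).Nonempty →
    IsClosed E₂ → E₂ ≠ Set.univ → (interior E₂).Nonempty →
    ∃ g ∈ G, g '' E₁ ⊆ E₂

/-- The support of a homeomorphism: the closure of its set of moved points. -/
def supp {X : Type*} [TopologicalSpace X] (g : X ≃ₜ X) : Set X :=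
  closure {x | g x ≠ x}

/-- `g` has small support: it is the identity off a proper closed subset. -/
def HasSmallSupport {X : Type*} [TopologicalSpace X] (g : X ≃ₜ X) : Prop :=
  ∃ U : Set X, IsClosed U ∧ U ≠ Set.univ ∧ ∀ x ∉ U, g x = x

/-- if `h` normalizes a full and flexible group `G` and is the
identity on a nonempty clopen set, then `h ∈ G`. -/
theorem normalizer_element_small_support_mem
    (G : Subgroup (Cantor ≃ₜ Cantor)) (hfull : IsFull G) (hflex : IsFlexible G)
    (h : Cantor ≃ₜ Cantor) (hnorm : h ∈ Subgroup.normalizer (G : Set (Cantor ≃ₜ Cantor)))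
    (Y : Set Cantor) (hY : IsClopen Y) (hYne : Y.Nonempty)
    (hid : ∀ x ∈ Y, h x = x) :
    h ∈ G := by
  by_cases hYuniv : Y = Set.univ
  · apply hfull
    intro x
    refine ⟨Set.univ, isOpen_univ, trivial, 1, one_mem G, fun y _ => ?_⟩
    show h y = y
    exact hid y (hYuniv ▸ trivial)
  · apply hfull
    intro x
    set U : Set Cantor := (fun f : Cantor => f 0) ⁻¹' {x 0} with hUdef
    have hcont : Continuous fun f : Cantor => f 0 := continuous_apply 0
    have hUopen : IsOpen U := (isOpen_discrete _).preimage hcont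
    have hUclosed : IsClosed U := (isClosed_discrete _).preimage hcont
    have hxU : x ∈ U := rfl
    have hUne : U ≠ Set.univ := by
      intro hcon
      have : (fun _ : ℕ => !(x 0)) ∈ U := hcon ▸ Set.mem_univ _
      exact Bool.not_ne_self (x 0) this
    have hUint : (interior U).Nonempty := ⟨x, by rw [hUopen.interior_eq]; exact hxU⟩
    have hYint : (interior Y).Nonempty := by rw [hY.isOpen.interior_eq]; exact hYne
    obtain ⟨g, hgG, hgU⟩ :=
      hflex U Y hUclosed hUne hUint hY.isClosed hYuniv hYint
    refine ⟨U, hUopen, hxU, h * g⁻¹ * h⁻¹ * g, ?_, ?_⟩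
    · have h1 : g⁻¹ ∈ G := inv_mem hgG
      have h2 : h * g⁻¹ * h⁻¹ ∈ G :=
        (Subgroup.mem_normalizer_iff.mp hnorm g⁻¹).mp h1
      exact mul_mem h2 hgG
    · intro u hu
      have hgu : g u ∈ Y := hgU ⟨u, hu, rfl⟩
      have hfix : h.symm (g u) = g u := h.symm_apply_eq.mpr (hid (g u) hgu).symm
      show h u = h (g.symm (h.symm (g u)))
      rw [hfix, g.symm_apply_apply]
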